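/- Let d ≥ 1 and a₁,…,a_d ≥ 1 be integers. If A₀ ⊆ {1,…,a₁}×⋯×{1,…,a_d} percolates with respect to the d-neighbour bootstrap process in the grid [a₁]×⋯×[a_d], then |A₀| ≥ ⌈(e(A₀) + Σ_{j=1}^{d} ∏_{i≠j} a_i)/d⌉. In particular, m(a₁,…,a_d;d) ≥ ⌈(Σ_{j=1}^{d} ∏_{i≠j} a_i)/d⌉. -/

import Mathlib

namespace BP

/-- The `r`-neighbour bootstrap closure of `A₀` in `G`: the smallest set `S` containing `A₀`
such that every vertex with at least `r` neighbours in `S` belongs to `S`. -/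
def closure {V : Type*} (G : SimpleGraph V) (r : ℕ) (A₀ : Set V) : Set V :=
  ⋂₀ {S : Set V | A₀ ⊆ S ∧ ∀ v : V, r ≤ (G.neighborSet v ∩ S).ncard → v ∈ S}

/-- `A₀` percolates under the `r`-neighbour bootstrap process in `G`. -/
def Percolates {V : Type*} (G : SimpleGraph V) (r : ℕ) (A₀ : Set V) : Prop :=
  closure G r A₀ = Set.univ

/-- The minimum cardinality of a set percolating under the `r`-neighbour process in `G`. -/
noncomputable def minPerc {V : Type*} (G : SimpleGraph V) (r : ℕ) : ℕ :=
  sInf {n : ℕ | ∃ A₀ : Set V, Percolates G r A₀ ∧ A₀.ncard = n}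

/-- The `d`-dimensional grid graph `[a 0] × ⋯ × [a (d-1)]`. -/
def gridD (d : ℕ) (a : Fin d → ℕ) : SimpleGraph ((i : Fin d) → Fin (a i)) where
  Adj u v := ∃ j : Fin d,
    ((u j : ℕ) + 1 = (v j : ℕ) ∨ (v j : ℕ) + 1 = (u j : ℕ)) ∧
      ∀ i : Fin d, i ≠ j → u i = v i
  symm := by
    constructor
    rintro u v ⟨j, hj, h⟩
    exact ⟨j, hj.symm, fun i hi => (h i hi).symm⟩
  loopless := by
    constructor
    rintro u ⟨j, hj, -⟩
    omega

/-- The number of edges of `G` having both endpoints in `A`. -/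
noncomputable def eIn {V : Type*} (G : SimpleGraph V) (A : Set V) : ℕ :=
  {e ∈ G.edgeSet | ∀ v ∈ e, v ∈ A}.ncard

/-! ### General lemmas about the bootstrap closure -/

lemma subset_closure {V : Type*} (G : SimpleGraph V) (r : ℕ) (A₀ : Set V) :
    A₀ ⊆ closure G r A₀ :=
  Set.subset_sInter fun _ hS => hS.1

lemma closure_subset {V : Type*} (G : SimpleGraph V) (r : ℕ) (A₀ : Set V) {S : Set V}
    (h1 : A₀ ⊆ S) (h2 : ∀ v : V, r ≤ (G.neighborSet v ∩ S).ncard → v ∈ S) :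
    closure G r A₀ ⊆ S :=
  Set.sInter_subset_of_mem ⟨h1, h2⟩

lemma closure_closed {V : Type*} [Finite V] (G : SimpleGraph V) (r : ℕ) (A₀ : Set V) (v : V)
    (hv : r ≤ (G.neighborSet v ∩ closure G r A₀).ncard) : v ∈ closure G r A₀ := by
  refine Set.mem_sInter.2 fun S hS => hS.2 v ?_
  refine hv.trans (Set.ncard_le_ncard ?_ (Set.toFinite _))
  exact Set.inter_subset_inter_right _ (Set.sInter_subset_of_mem hS)

lemma eIn_insert {V : Type*} [Finite V] (G : SimpleGraph V) {S : Set V} {v : V}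
    (hv : v ∉ S) : eIn G S + (G.neighborSet v ∩ S).ncard ≤ eIn G (insert v S) := by
  classical
  set E : Set (Sym2 V) := {e ∈ G.edgeSet | ∀ w ∈ e, w ∈ S} with hE
  set N : Set (Sym2 V) := (fun w => s(v, w)) '' (G.neighborSet v ∩ S) with hN
  have hNcard : N.ncard = (G.neighborSet v ∩ S).ncard := by
    apply Set.ncard_image_of_injOn
    intro w hw w' hw' hww
    rcases Sym2.eq_iff.1 hww with ⟨-, h⟩ | ⟨h1, h2⟩
    · exact h
    · exact absurd h2 (G.ne_of_adj hw.1).symm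
  have hdisj : Disjoint E N := by
    rw [Set.disjoint_left]
    rintro e heE ⟨w, hw, rfl⟩
    exact hv (heE.2 v (Sym2.mem_mk_left v w))
  have hsub : E ∪ N ⊆ {e ∈ G.edgeSet | ∀ w ∈ e, w ∈ insert v S} := by
    rintro e (heE | ⟨w, hw, rfl⟩)
    · exact ⟨heE.1, fun u hu => Set.mem_insert_iff.2 (Or.inr (heE.2 u hu))⟩
    · refine ⟨G.mem_edgeSet.2 hw.1, fun u hu => ?_⟩
      rcases Sym2.mem_iff.1 hu with rfl | rfl
      · exact Set.mem_insert _ _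
      · exact Set.mem_insert_iff.2 (Or.inr hw.2)
  calc eIn G S + (G.neighborSet v ∩ S).ncard = E.ncard + N.ncard := by rw [hNcard]; rfl
    _ = (E ∪ N).ncard := (Set.ncard_union_eq hdisj (Set.toFinite _) (Set.toFinite _)).symm
    _ ≤ _ := Set.ncard_le_ncard hsub (Set.toFinite _)

/-- The key "perimeter" monotonicity: along the bootstrap process the quantity
`r * |S| - e(S)` does not increase. -/
lemma potential {V : Type*} [Finite V] (G : SimpleGraph V) (r : ℕ) (A₀ : Set V) :
    r * (closure G r A₀).ncard + eIn G A₀ ≤ r * A₀.ncard + eIn G (closure G r A₀) := by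
  classical
  set C := closure G r A₀ with hCdef
  set 𝒢 : Set (Set V) :=
    {S | A₀ ⊆ S ∧ S ⊆ C ∧ r * S.ncard + eIn G A₀ ≤ r * A₀.ncard + eIn G S} with h𝒢
  have hA₀ : A₀ ∈ 𝒢 := ⟨le_refl _, subset_closure G r A₀, le_refl _⟩
  obtain ⟨S, hS, hmax⟩ :=
    Set.Finite.exists_maximalFor Set.ncard 𝒢 (Set.toFinite _) ⟨A₀, hA₀⟩
  rcases eq_or_ne S C with rfl | hSC
  · exact hS.2.2
  · exfalso
    have hnc : ¬ ∀ v : V, r ≤ (G.neighborSet v ∩ S).ncard → v ∈ S := by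
      intro hcl
      exact hSC (le_antisymm hS.2.1 (closure_subset G r A₀ hS.1 hcl))
    push_neg at hnc
    obtain ⟨v, hvr, hvS⟩ := hnc
    have hvC : v ∈ C := closure_closed G r A₀ v
      (hvr.trans (Set.ncard_le_ncard (Set.inter_subset_inter_right _ hS.2.1) (Set.toFinite _)))
    have hins : insert v S ∈ 𝒢 := by
      refine ⟨hS.1.trans (Set.subset_insert _ _), Set.insert_subset hvC hS.2.1, ?_⟩
      have h1 := eIn_insert G hvS
      have h2 : (insert v S).ncard = S.ncard + 1 :=
        Set.ncard_insert_of_notMem hvS (Set.toFinite _)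
      have h3 := hS.2.2
      have h4 : r * (S.ncard + 1) = r * S.ncard + r := by ring
      rw [h2, h4]
      omega
    have h5 := hmax hins (Set.ncard_le_ncard (Set.subset_insert _ _) (Set.toFinite _))
    have h2 : (insert v S).ncard = S.ncard + 1 :=
      Set.ncard_insert_of_notMem hvS (Set.toFinite _)
    omega

/-! ### Counting lemmas for the grid -/

lemma ncard_fiber (d : ℕ) (a : Fin d → ℕ) (j : Fin d) (c : Fin (a j)) :
    {u : (i : Fin d) → Fin (a i) | u j = c}.ncard = ∏ i ∈ Finset.univ.erase j, a i := by
  classical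
  rw [← Nat.card_coe_set_eq]
  have e : {u : (i : Fin d) → Fin (a i) | u j = c} ≃ ((i : {i : Fin d // i ≠ j}) → Fin (a i)) := by
    refine Equiv.trans (Equiv.subtypeEquiv (q := fun p => p.1 = c)
      (Equiv.piSplitAt j fun i => Fin (a i)) (fun u => by simp [Equiv.piSplitAt])) ?_
    exact { toFun := fun p => p.1.2
            invFun := fun g => ⟨(c, g), rfl⟩
            left_inv := fun p => by
              obtain ⟨⟨p1, p2⟩, hp⟩ := p
              cases hp
              rfl
            right_inv := fun g => rfl }
  rw [Nat.card_congr e, Nat.card_pi]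
  rw [Finset.prod_subtype (F := inferInstance) (Finset.univ.erase j) (p := fun i => i ≠ j)
    (by simp) a]
  simp

lemma ncard_lower (d : ℕ) (a : Fin d → ℕ) (j : Fin d) (haj : 1 ≤ a j) :
    {u : (i : Fin d) → Fin (a i) | (u j : ℕ) + 1 < a j}.ncard
      + ∏ i ∈ Finset.univ.erase j, a i = ∏ i, a i := by
  classical
  have hc : {u : (i : Fin d) → Fin (a i) | (u j : ℕ) + 1 < a j}ᶜ
      = {u : (i : Fin d) → Fin (a i) | u j = ⟨a j - 1, by omega⟩} := by
    ext u
    have := (u j).isLt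
    simp only [Set.mem_compl_iff, Set.mem_setOf_eq, not_lt, Fin.ext_iff]
    omega
  have h2 := Set.ncard_add_ncard_compl {u : (i : Fin d) → Fin (a i) | (u j : ℕ) + 1 < a j}
    (Set.toFinite _) (Set.toFinite _)
  rw [hc, ncard_fiber] at h2
  rw [h2, Nat.card_pi]
  simp

/-- Ordered pairs forming an edge in direction `j`, lower endpoint first. -/
def P (d : ℕ) (a : Fin d → ℕ) (j : Fin d) :
    Set (((i : Fin d) → Fin (a i)) × ((i : Fin d) → Fin (a i))) :=
  {p | (p.1 j : ℕ) + 1 = (p.2 j : ℕ) ∧ ∀ i : Fin d, i ≠ j → p.1 i = p.2 i}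

lemma Pj_ncard_le (d : ℕ) (a : Fin d → ℕ) (j : Fin d) :
    (P d a j).ncard ≤ {u : (i : Fin d) → Fin (a i) | (u j : ℕ) + 1 < a j}.ncard := by
  have hinj : Set.InjOn Prod.fst (P d a j) := by
    rintro ⟨u, v⟩ hp ⟨u', v'⟩ hq (h : u = u')
    subst h
    simp only [P, Set.mem_setOf_eq] at hp hq
    refine Prod.ext rfl ?_
    funext i
    by_cases hi : i = j
    · subst hi
      have h1 := hp.1
      have h2 := hq.1
      show v i = v' i
      exact Fin.ext (by omega)
    · exact (hp.2 i hi).symm.trans (hq.2 i hi)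
  rw [← Set.ncard_image_of_injOn hinj]
  refine Set.ncard_le_ncard ?_ (Set.toFinite _)
  rintro u ⟨⟨u', v⟩, hp, rfl⟩
  simp only [P, Set.mem_setOf_eq] at hp
  have := (v j).isLt
  have h1 := hp.1
  simp only [Set.mem_setOf_eq]
  omega

lemma ncard_biUnion_le {α ι : Type*} [Finite α] (s : Finset ι) (f : ι → Set α) :
    (⋃ i ∈ s, f i).ncard ≤ ∑ i ∈ s, (f i).ncard := by
  classical
  induction s using Finset.induction with
  | empty => simp
  | insert _ _ h ih =>
    rw [Finset.sum_insert h, Finset.set_biUnion_insert]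
    exact (Set.ncard_union_le _ _).trans (Nat.add_le_add_left ih _)

lemma edgeSet_subset (d : ℕ) (a : Fin d → ℕ) :
    (gridD d a).edgeSet ⊆ Function.uncurry Sym2.mk '' (⋃ j ∈ Finset.univ, P d a j) := by
  intro e he
  induction e with
  | h u v =>
    obtain ⟨j, hj, hcoord⟩ := he
    rcases hj with hj | hj
    · exact ⟨(u, v), Set.mem_biUnion (Finset.mem_univ j) ⟨hj, hcoord⟩, rfl⟩
    · exact ⟨(v, u), Set.mem_biUnion (Finset.mem_univ j)
        ⟨hj, fun i hi => (hcoord i hi).symm⟩, Sym2.eq_swap⟩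

lemma edge_bound (d : ℕ) (a : Fin d → ℕ) (ha : ∀ i, 1 ≤ a i) :
    (gridD d a).edgeSet.ncard + ∑ j : Fin d, ∏ i ∈ Finset.univ.erase j, a i
      ≤ d * ∏ i, a i := by
  classical
  have h1 : (gridD d a).edgeSet.ncard ≤ ∑ j : Fin d, (P d a j).ncard := by
    calc (gridD d a).edgeSet.ncard
        ≤ (Function.uncurry Sym2.mk '' (⋃ j ∈ Finset.univ, P d a j)).ncard :=
          Set.ncard_le_ncard (edgeSet_subset d a) (Set.toFinite _)
      _ ≤ (⋃ j ∈ Finset.univ, P d a j).ncard := Set.ncard_image_le (Set.toFinite _)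
      _ ≤ ∑ j : Fin d, (P d a j).ncard := ncard_biUnion_le _ _
  have h2 : ∀ j : Fin d, (P d a j).ncard + ∏ i ∈ Finset.univ.erase j, a i ≤ ∏ i, a i := by
    intro j
    calc (P d a j).ncard + ∏ i ∈ Finset.univ.erase j, a i
        ≤ {u : (i : Fin d) → Fin (a i) | (u j : ℕ) + 1 < a j}.ncard
            + ∏ i ∈ Finset.univ.erase j, a i :=
          Nat.add_le_add_right (Pj_ncard_le d a j) _
      _ = ∏ i, a i := ncard_lower d a j (ha j)
  calc (gridD d a).edgeSet.ncard + ∑ j : Fin d, ∏ i ∈ Finset.univ.erase j, a i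
      ≤ ∑ j : Fin d, (P d a j).ncard + ∑ j : Fin d, ∏ i ∈ Finset.univ.erase j, a i :=
        Nat.add_le_add_right h1 _
    _ = ∑ j : Fin d, ((P d a j).ncard + ∏ i ∈ Finset.univ.erase j, a i) :=
        (Finset.sum_add_distrib).symm
    _ ≤ ∑ j : Fin d, ∏ i, a i := Finset.sum_le_sum fun j _ => h2 j
    _ = d * ∏ i, a i := by
        rw [Finset.sum_const, Finset.card_univ, Fintype.card_fin, smul_eq_mul]

/-- The key inequality in ℕ. -/
lemma key (d : ℕ) (a : Fin d → ℕ) (ha : ∀ i, 1 ≤ a i)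
    (A₀ : Set ((i : Fin d) → Fin (a i))) (h : Percolates (gridD d a) d A₀) :
    eIn (gridD d a) A₀ + ∑ j : Fin d, ∏ i ∈ Finset.univ.erase j, a i ≤ d * A₀.ncard := by
  have hpot := potential (gridD d a) d A₀
  rw [show closure (gridD d a) d A₀ = Set.univ from h] at hpot
  have h1 : (Set.univ : Set ((i : Fin d) → Fin (a i))).ncard = ∏ i, a i := by
    rw [Set.ncard_univ, Nat.card_pi]
    simp
  have h2 : eIn (gridD d a) Set.univ = (gridD d a).edgeSet.ncard := by
    unfold eIn
    congr 1
    ext e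
    simp
  have h3 := edge_bound d a ha
  rw [h1, h2] at hpot
  generalize hX : d * ∏ i, a i = X at hpot h3
  generalize hY : d * A₀.ncard = Y at hpot ⊢
  omega

lemma perc_univ {V : Type*} (G : SimpleGraph V) (r : ℕ) :
    Percolates G r (Set.univ : Set V) :=
  Set.univ_subset_iff.1 (subset_closure G r Set.univ)

/-- **Theorem (Statement 4).** Surface-area lower bound for percolating sets for the
`d`-neighbour process in the grid `[a₁] × ⋯ × [a_d]`, and the resulting bound on `m`. -/
theorem grid_surface_area_lower_bound (d : ℕ) (hd : 1 ≤ d) (a : Fin d → ℕ)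
    (ha : ∀ i, 1 ≤ a i) (A₀ : Set ((i : Fin d) → Fin (a i)))
    (h : Percolates (gridD d a) d A₀) :
    ⌈(((eIn (gridD d a) A₀ + ∑ j : Fin d, ∏ i ∈ Finset.univ.erase j, a i : ℕ) : ℚ)) / (d : ℚ)⌉
        ≤ (A₀.ncard : ℤ) ∧
    ⌈(((∑ j : Fin d, ∏ i ∈ Finset.univ.erase j, a i : ℕ) : ℚ)) / (d : ℚ)⌉
        ≤ (minPerc (gridD d a) d : ℤ) := by
  have hd0 : (0 : ℚ) < (d : ℚ) := by exact_mod_cast hd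
  constructor
  · rw [Int.ceil_le, div_le_iff₀ hd0]
    have hk := key d a ha A₀ h
    have hk' : eIn (gridD d a) A₀ + ∑ j : Fin d, ∏ i ∈ Finset.univ.erase j, a i
        ≤ A₀.ncard * d := by rw [Nat.mul_comm]; exact hk
    push_cast
    exact_mod_cast hk'
  · have hne : {n : ℕ | ∃ B : Set ((i : Fin d) → Fin (a i)),
        Percolates (gridD d a) d B ∧ B.ncard = n}.Nonempty :=
      ⟨_, Set.univ, perc_univ _ _, rfl⟩
    obtain ⟨B, hB, hcard⟩ := Nat.sInf_mem hne
    have hk := key d a ha B hB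
    rw [Int.ceil_le, div_le_iff₀ hd0]
    have hk' : ∑ j : Fin d, ∏ i ∈ Finset.univ.erase j, a i ≤ minPerc (gridD d a) d * d := by
      have : minPerc (gridD d a) d = B.ncard := hcard.symm
      rw [this, Nat.mul_comm]
      omega
    push_cast
    exact_mod_cast hk'

end BP
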